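/- Let k be an algebraically closed field of characteristic 0, let r ≥ 2, and let G = ⟨(1/r)(a₁,…,aₙ)⟩ ⊂ SL(n,k) be the finite cyclic subgroup of order r generated by the diagonal matrix g = diag(ξ^{a₁},…,ξ^{aₙ}). For integers n₁, n₂ ≥ 1 with n₁ + n₂ = n, the group G embeds into SL(n₁,k) × SL(n₂,k) if and only if there exists a subset S ⊆ {1,…,n} of cardinality n₁ such that r divides Σ_{i∈S} aᵢ. -/

import Mathlib

open Matrix Finset Polynomial

private lemma multiset_exists_le_of_le_map {α β : Type*} [DecidableEq α] [DecidableEq β]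
    {f : α → β} :
    ∀ {t : Multiset α} {s : Multiset β}, s ≤ t.map f → ∃ u ≤ t, u.map f = s := by
  intro t
  induction t using Multiset.induction with
  | empty =>
    intro s hs
    rw [Multiset.map_zero, Multiset.le_zero] at hs
    exact ⟨0, le_rfl, by simp [hs]⟩
  | cons a t ih =>
    intro s hs
    rw [Multiset.map_cons] at hs
    by_cases hmem : f a ∈ s
    · have h1 : s.erase (f a) ≤ t.map f := by
        have h2 := Multiset.erase_le_erase (f a) hs
        rwa [Multiset.erase_cons_head] at h2
      obtain ⟨u, hu, hum⟩ := ih h1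
      refine ⟨a ::ₘ u, Multiset.cons_le_cons a hu, ?_⟩
      rw [Multiset.map_cons, hum, Multiset.cons_erase hmem]
    · have h1 : s ≤ t.map f := by
        rw [Multiset.le_iff_count]
        intro b
        have hc := Multiset.count_le_of_le b hs
        rw [Multiset.count_cons] at hc
        by_cases hb : b = f a
        · subst hb
          simp [Multiset.count_eq_zero_of_notMem hmem]
        · simpa [hb] using hc
      obtain ⟨u, hu, hum⟩ := ih h1
      exact ⟨u, le_trans hu (Multiset.le_cons_self t a), hum⟩

private lemma charpoly_diagonal' {R : Type*} [CommRing R] {n : Type*} [DecidableEq n] [Fintype n]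
    (d : n → R) :
    (Matrix.diagonal d).charpoly = ∏ i, (Polynomial.X - Polynomial.C (d i)) := by
  have h : charmatrix (Matrix.diagonal d) =
      Matrix.diagonal fun i => (Polynomial.X - Polynomial.C (d i)) := by
    ext i j
    by_cases h : i = j
    · subst h; simp
    · rw [charmatrix_apply_ne _ _ _ h, Matrix.diagonal_apply_ne _ h,
        Matrix.diagonal_apply_ne _ h, map_zero, neg_zero]
  rw [Matrix.charpoly, h, Matrix.det_diagonal]

private lemma charpoly_conj_of_mul_eq_one {R : Type*} [CommRing R] {n : Type*} [DecidableEq n]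
    [Fintype n] {P Q : Matrix n n R} (h : P * Q = 1) (A : Matrix n n R) :
    (P * A * Q).charpoly = A.charpoly := by
  have hPQ' : P.map (Polynomial.C : R → R[X]) * Q.map Polynomial.C = 1 := by
    rw [← Matrix.map_mul (f := (Polynomial.C : R →+* R[X])), h,
      Matrix.map_one _ (map_zero _) (map_one _)]
  have key : charmatrix (P * A * Q) =
      P.map Polynomial.C * charmatrix A * Q.map Polynomial.C := by
    rw [charmatrix, charmatrix, RingHom.mapMatrix_apply, RingHom.mapMatrix_apply,
      Matrix.mul_sub, Matrix.sub_mul]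
    congr 1
    · rw [← (Matrix.scalar_commute (Polynomial.X : R[X])
        (fun r' => Commute.all _ _) (P.map Polynomial.C)).eq, mul_assoc, hPQ', mul_one]
    · rw [Matrix.map_mul (f := (Polynomial.C : R →+* R[X])),
        Matrix.map_mul (f := (Polynomial.C : R →+* R[X]))]
  have hdet : (P.map (Polynomial.C : R → R[X])).det * (Q.map Polynomial.C).det = 1 := by
    rw [← Matrix.det_mul, hPQ', Matrix.det_one]
  rw [Matrix.charpoly, Matrix.charpoly, key, Matrix.det_mul, Matrix.det_mul, mul_right_comm,
    hdet, one_mul]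

/-- A subset `G` of the matrices `Matrix (Fin n) (Fin n) k` (thought of as a subgroup of
`SL(n, k)`) *embeds into* `SL(n₁, k) × SL(n₂, k)` (where `n₁ + n₂ = n`) if there is an
invertible matrix `P` conjugating every element of `G` into a block-diagonal matrix whose
two diagonal blocks have determinant `1`. -/
def EmbedsIntoProdSL (k : Type) [Field k] {n : ℕ} (n₁ n₂ : ℕ) (hn : n₁ + n₂ = n)
    (G : Set (Matrix (Fin n) (Fin n) k)) : Prop :=
  ∃ P : Matrix (Fin n) (Fin n) k, IsUnit P ∧
    ∀ h ∈ G, ∃ (h₁ : Matrix (Fin n₁) (Fin n₁) k) (h₂ : Matrix (Fin n₂) (Fin n₂) k),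
      h₁.det = 1 ∧ h₂.det = 1 ∧
      P * h * P⁻¹ =
        Matrix.reindex (finSumFinEquiv.trans (finCongr hn)) (finSumFinEquiv.trans (finCongr hn))
          (Matrix.fromBlocks h₁ 0 0 h₂)

/-- The cyclic group `G = ⟨(1/r)(a₁, …, aₙ)⟩ < SL(n, k)` embeds into
`SL(n₁, k) × SL(n₂, k)` (where `n₁, n₂ ≥ 1` and `n₁ + n₂ = n`) if and only if there is a
subset `S ⊆ {1, …, n}` of cardinality `n₁` such that `r` divides `∑_{i ∈ S} aᵢ`. -/
theorem embedsIntoProdSL_iff_exists_subset_card_dvd_sum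
    (k : Type) [Field k] [IsAlgClosed k] [CharZero k]
    {n : ℕ} {r : ℕ} (hr : 2 ≤ r) (ξ : k) (hξ : IsPrimitiveRoot ξ r)
    (a : Fin n → ℕ)
    (hdet : r ∣ ∑ i, a i)
    (horder : Nat.gcd r (Finset.univ.gcd a) = 1)
    (n₁ n₂ : ℕ) (hn₁ : 1 ≤ n₁) (hn₂ : 1 ≤ n₂) (hn : n₁ + n₂ = n) :
    EmbedsIntoProdSL k n₁ n₂ hn
        {A | ∃ m : ℕ, A = (Matrix.diagonal fun i => ξ ^ a i) ^ m} ↔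
      ∃ S : Finset (Fin n), S.card = n₁ ∧ r ∣ ∑ i ∈ S, a i := by
  classical
  set D : Matrix (Fin n) (Fin n) k := Matrix.diagonal fun i => ξ ^ a i with hD
  set e₀ : Fin n₁ ⊕ Fin n₂ ≃ Fin n := finSumFinEquiv.trans (finCongr hn) with he₀
  constructor
  · rintro ⟨P, hP, hb⟩
    obtain ⟨h₁, h₂, hd₁, hd₂, heq⟩ := hb D ⟨1, (pow_one D).symm⟩
    have hPdet : IsUnit P.det := (Matrix.isUnit_iff_isUnit_det P).mp hP
    have hcp : h₁.charpoly * h₂.charpoly = ∏ i, (Polynomial.X - Polynomial.C (ξ ^ a i)) := by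
      have h1 : (P * D * P⁻¹).charpoly = D.charpoly :=
        charpoly_conj_of_mul_eq_one (Matrix.mul_nonsing_inv P hPdet) D
      rw [heq, Matrix.charpoly_reindex, Matrix.charpoly_fromBlocks_zero₂₁] at h1
      rw [h1, hD, charpoly_diagonal']
    set f : Fin n → k := fun i => ξ ^ a i with hf
    have hprodform : (∏ i, (Polynomial.X - Polynomial.C (f i))) =
        (((Finset.univ.val.map f)).map fun c => Polynomial.X - Polynomial.C c).prod := by
      rw [Multiset.map_map, Finset.prod_eq_multiset_prod]
      rfl
    have hne : h₁.charpoly * h₂.charpoly ≠ 0 := by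
      rw [hcp]
      exact (Polynomial.monic_prod_of_monic _ _ fun i _ =>
        Polynomial.monic_X_sub_C _).ne_zero
    have hroots : h₁.charpoly.roots + h₂.charpoly.roots = Finset.univ.val.map f := by
      rw [← Polynomial.roots_mul hne, hcp, hprodform,
        Polynomial.roots_multiset_prod_X_sub_C]
    have hle : h₁.charpoly.roots ≤ Finset.univ.val.map f := by
      rw [← hroots]; exact Multiset.le_add_right _ _
    obtain ⟨u, hu, hum⟩ := multiset_exists_le_of_le_map hle
    have hnodup : u.Nodup := Multiset.nodup_of_le hu Finset.univ.nodup
    have hcard : Multiset.card u = n₁ := by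
      have h2 := congrArg Multiset.card hum
      rw [Multiset.card_map] at h2
      rw [h2, IsAlgClosed.card_roots_eq_natDegree, Matrix.charpoly_natDegree_eq_dim,
        Fintype.card_fin]
    refine ⟨⟨u, hnodup⟩, hcard, ?_⟩
    have hprod : (u.map f).prod = 1 := by
      rw [hum, ← Matrix.det_eq_prod_roots_charpoly, hd₁]
    have hprod2 : ∏ i ∈ (⟨u, hnodup⟩ : Finset (Fin n)), ξ ^ a i = 1 := by
      rw [Finset.prod_eq_multiset_prod]
      exact hprod
    rw [Finset.prod_pow_eq_pow_sum] at hprod2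
    exact (hξ.pow_eq_one_iff_dvd _).mp hprod2
  · rintro ⟨S, hScard, hSdvd⟩
    have hScompl : Sᶜ.card = n₂ := by
      rw [Finset.card_compl, hScard, Fintype.card_fin]
      omega
    set E : Fin n₁ ⊕ Fin n₂ ≃ Fin n :=
      (Equiv.sumCongr (S.orderIsoOfFin hScard).toEquiv
        ((Sᶜ.orderIsoOfFin hScompl).toEquiv.trans
          (Equiv.subtypeEquivRight fun x => Finset.mem_compl))).trans
        (Equiv.sumCompl (· ∈ S)) with hE
    have hEinl : ∀ j, E (Sum.inl j) = ↑(S.orderIsoOfFin hScard j) := fun j => by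
      simp [hE]
    have hEinr : ∀ j, E (Sum.inr j) = ↑(Sᶜ.orderIsoOfFin hScompl j) := fun j => by
      simp [hE]
    have hsum₁ : ∑ j : Fin n₁, a (E (Sum.inl j)) = ∑ i ∈ S, a i := by
      rw [← Finset.sum_coe_sort S a]
      exact Fintype.sum_equiv (S.orderIsoOfFin hScard).toEquiv _ _ fun j => by
        rw [hEinl]; rfl
    have hsum₂ : ∑ j : Fin n₂, a (E (Sum.inr j)) = ∑ i ∈ Sᶜ, a i := by
      rw [← Finset.sum_coe_sort Sᶜ a]
      exact Fintype.sum_equiv (Sᶜ.orderIsoOfFin hScompl).toEquiv _ _ fun j => by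
        rw [hEinr]; rfl
    have hSdvd₂ : r ∣ ∑ i ∈ Sᶜ, a i := by
      have htot := Finset.sum_add_sum_compl S a
      exact (Nat.dvd_add_right hSdvd).mp (htot ▸ hdet)
    set π : Fin n ≃ Fin n := e₀.symm.trans E with hπ
    set P : Matrix (Fin n) (Fin n) k := (Equiv.toPEquiv π).toMatrix with hPdef
    set Q : Matrix (Fin n) (Fin n) k := (Equiv.toPEquiv π.symm).toMatrix with hQdef
    have hPQ : P * Q = 1 := by
      rw [hPdef, hQdef, ← PEquiv.toMatrix_trans, ← Equiv.toPEquiv_trans,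
        Equiv.self_trans_symm, Equiv.toPEquiv_refl, PEquiv.toMatrix_refl]
    have hQP : Q * P = 1 := by
      rw [hPdef, hQdef, ← PEquiv.toMatrix_trans, ← Equiv.toPEquiv_trans,
        Equiv.symm_trans_self, Equiv.toPEquiv_refl, PEquiv.toMatrix_refl]
    have hPinv : P⁻¹ = Q := Matrix.inv_eq_right_inv hPQ
    refine ⟨P, ⟨⟨P, Q, hPQ, hQP⟩, rfl⟩, ?_⟩
    rintro h ⟨m, rfl⟩
    refine ⟨Matrix.diagonal fun j => (ξ ^ a (E (Sum.inl j))) ^ m,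
            Matrix.diagonal fun j => (ξ ^ a (E (Sum.inr j))) ^ m, ?_, ?_, ?_⟩
    · rw [Matrix.det_diagonal]
      have : ∀ j : Fin n₁, (ξ ^ a (E (Sum.inl j))) ^ m = ξ ^ (a (E (Sum.inl j)) * m) :=
        fun j => (pow_mul ξ _ m).symm
      rw [Finset.prod_congr rfl fun j _ => this j, Finset.prod_pow_eq_pow_sum,
        ← Finset.sum_mul, hsum₁]
      exact (hξ.pow_eq_one_iff_dvd _).mpr (hSdvd.mul_right m)
    · rw [Matrix.det_diagonal]
      have : ∀ j : Fin n₂, (ξ ^ a (E (Sum.inr j))) ^ m = ξ ^ (a (E (Sum.inr j)) * m) :=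
        fun j => (pow_mul ξ _ m).symm
      rw [Finset.prod_congr rfl fun j _ => this j, Finset.prod_pow_eq_pow_sum,
        ← Finset.sum_mul, hsum₂]
      exact (hξ.pow_eq_one_iff_dvd _).mpr (hSdvd₂.mul_right m)
    · have hDm : D ^ m = Matrix.diagonal fun i => (ξ ^ a i) ^ m := by
        rw [hD, Matrix.diagonal_pow]
        rfl
      rw [hPinv, hDm, hPdef, hQdef, PEquiv.toMatrix_toPEquiv_mul,
        PEquiv.mul_toMatrix_toPEquiv, Matrix.submatrix_submatrix,
        Equiv.symm_symm, Matrix.reindex_apply, Matrix.fromBlocks_diagonal]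
      rw [show ((⇑π ∘ id : Fin n → Fin n)) = ⇑π by funext x; rfl,
        show ((id ∘ ⇑π : Fin n → Fin n)) = ⇑π by funext x; rfl]
      rw [Matrix.submatrix_diagonal_equiv, Matrix.submatrix_diagonal_equiv]
      have harg : ((fun i => (ξ ^ a i) ^ m) ∘ ⇑π) =
          (Sum.elim (fun j => (ξ ^ a (E (Sum.inl j))) ^ m)
            (fun j => (ξ ^ a (E (Sum.inr j))) ^ m)) ∘ ⇑e₀.symm := by
        funext x
        show (ξ ^ a (π x)) ^ m = Sum.elim _ _ (e₀.symm x)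
        show (ξ ^ a (E (e₀.symm x))) ^ m = _
        rcases e₀.symm x with j | j
        · rfl
        · rfl
      rw [harg]
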